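/- arXiv:1511.01635 — 2 statements merged into one kernel-verified Lean document; each statement's English description precedes it below -/
import Mathlib

section
/- Under the extended global error bound property eGEB(κ, ω) for φ = f + g, the proximal gradient method with step γ ≥ L contracts function values: for all iterates with φ(x_i) − φ* ≤ ω, one has φ(x_{i+1}) − φ* ≤ (1 − κ/(2γ))(φ(x_i) − φ*). -/
open RealInnerProductSpace Metric Set Filter

abbrev Euc (n : ℕ) : Type := EuclideanSpace ℝ (Fin n)

lemma line_deriv {n : ℕ} (f : Euc n → ℝ) (f' : Euc n → Euc n)
    (hgrad : ∀ x, HasGradientAt f (f' x) x) (a v : Euc n) (t : ℝ) :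
    HasDerivAt (fun s : ℝ => f (a + s • v)) ⟪f' (a + t • v), v⟫ t := by
  have hc : HasDerivAt (fun s : ℝ => a + s • v) v t := by
    simpa using ((hasDerivAt_id t).smul_const v).const_add a
  convert (hgrad (a + t • v)).hasFDerivAt.comp_hasDerivAt t hc using 1
  · rfl
  · rfl
  · rfl
  · simp

lemma grad_convex_ineq {n : ℕ} (f : Euc n → ℝ) (f' : Euc n → Euc n)
    (hconv : ConvexOn ℝ Set.univ f) (hgrad : ∀ x, HasGradientAt f (f' x) x)
    (a y : Euc n) : f a + ⟪f' a, y - a⟫ ≤ f y := by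
  set v := y - a with hv
  set h : ℝ → ℝ := fun s : ℝ => f (a + s • v) with hh
  have hline : ConvexOn ℝ (Set.univ : Set ℝ) h := by
    have h2 := hconv.comp_affineMap (AffineMap.lineMap a y)
    have he : h = f ∘ (AffineMap.lineMap a y) := by
      funext s
      simp [hh, AffineMap.lineMap_apply, hv, add_comm]
    rw [he]
    simpa using h2
  have hd := line_deriv f f' hgrad a v 0
  have hd0 : HasDerivAt h ⟪f' a, v⟫ 0 := by
    convert hd using 2 <;> simp
  have key := hline.le_slope_of_hasDerivAt (Set.mem_univ 0) (Set.mem_univ 1)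
    one_pos hd0
  have hs : slope h 0 1 = f y - f a := by
    simp [slope_def_field, hh, hv]
  rw [hs] at key
  have : (⟪f' a, v⟫ : ℝ) ≤ f y - f a := by exact_mod_cast key
  linarith

lemma descent_lemma {n : ℕ} (L : ℝ) (f : Euc n → ℝ) (f' : Euc n → Euc n)
    (hgrad : ∀ x, HasGradientAt f (f' x) x)
    (hLip : ∀ x y, ‖f' x - f' y‖ ≤ L * ‖x - y‖) (a y : Euc n) :
    f y ≤ f a + ⟪f' a, y - a⟫ + L / 2 * ‖y - a‖ ^ 2 := by
  set v := y - a with hv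
  set ψ : ℝ → ℝ := fun t => f (a + t • v) - t * ⟪f' a, v⟫ - L / 2 * t ^ 2 * ‖v‖ ^ 2 with hψ
  have hder : ∀ t : ℝ, HasDerivAt ψ (⟪f' (a + t • v), v⟫ - ⟪f' a, v⟫ - L * t * ‖v‖ ^ 2) t := by
    intro t
    have h1 := line_deriv f f' hgrad a v t
    have h2 : HasDerivAt (fun s : ℝ => s * ⟪f' a, v⟫) ⟪f' a, v⟫ t := by
      simpa using (hasDerivAt_id t).mul_const ⟪f' a, v⟫
    have h3 : HasDerivAt (fun s : ℝ => L / 2 * s ^ 2 * ‖v‖ ^ 2) (L * t * ‖v‖ ^ 2) t := by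
      have h4 : HasDerivAt (fun s : ℝ => s ^ 2) (2 * t) t := by
        simpa using hasDerivAt_pow 2 t
      have h5 := (h4.const_mul (L / 2)).mul_const (‖v‖ ^ 2)
      convert h5 using 1
      · rfl
      · rfl
      · ring
    convert (h1.sub h2).sub h3 using 1
    · rfl
    · rfl
    · rfl
  have hmono : AntitoneOn ψ (Set.Icc 0 1) := by
    apply antitoneOn_of_deriv_nonpos (convex_Icc 0 1)
    · exact fun t _ => (hder t).differentiableAt.continuousAt.continuousWithinAt
    · intro t ht
      exact ((hder t).differentiableAt.differentiableWithinAt)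
    · intro t ht
      rw [interior_Icc] at ht
      rw [(hder t).deriv]
      have hb : ⟪f' (a + t • v) - f' a, v⟫ ≤ L * t * ‖v‖ ^ 2 := by
        calc ⟪f' (a + t • v) - f' a, v⟫ ≤ ‖f' (a + t • v) - f' a‖ * ‖v‖ := real_inner_le_norm _ _
          _ ≤ (L * ‖(a + t • v) - a‖) * ‖v‖ := by
              have := hLip (a + t • v) a
              nlinarith [norm_nonneg v]
          _ = L * t * ‖v‖ ^ 2 := by
              simp [norm_smul, abs_of_pos ht.1]
              ring
      rw [inner_sub_left] at hb
      linarith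
  have h01 := hmono (Set.mem_Icc.2 ⟨le_refl 0, zero_le_one⟩)
    (Set.mem_Icc.2 ⟨zero_le_one, le_refl 1⟩) zero_le_one
  have hy : a + (1:ℝ) • v = y := by simp [hv]
  have e1 : ψ 1 = f y - ⟪f' a, v⟫ - L / 2 * ‖v‖ ^ 2 := by
    simp only [hψ]; rw [hy]; ring
  have e0 : ψ 0 = f a := by simp [hψ]
  rw [e1, e0] at h01
  linarith

lemma norm_combo {n : ℕ} (v w : Euc n) (σ : ℝ) :
    ‖(1 - σ) • v + σ • w‖ ^ 2 = (1 - σ) * ‖v‖ ^ 2 + σ * ‖w‖ ^ 2 - σ * (1 - σ) * ‖v - w‖ ^ 2 := by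
  have h : ∀ z : Euc n, ‖z‖ ^ 2 = ⟪z, z⟫ := fun z => (real_inner_self_eq_norm_sq z).symm
  simp only [h, inner_add_left, inner_add_right, inner_sub_left, inner_sub_right,
    real_inner_smul_left, real_inner_smul_right]
  rw [real_inner_comm w v]
  ring


lemma ereal_ne_top_of_add_le (c r : ℝ) (e : EReal) (h : (c : EReal) + e ≤ (r : EReal)) :
    e ≠ ⊤ := by
  intro he
  rw [he, EReal.coe_add_top] at h
  exact EReal.coe_ne_top r (top_le_iff.1 h)

lemma ereal_ne_top_of_le_coe (r : ℝ) (e : EReal) (h : e ≤ (r : EReal)) : e ≠ ⊤ :=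
  fun he => EReal.coe_ne_top r (top_le_iff.1 (he ▸ h))

set_option maxHeartbeats 2000000 in
theorem stmt_7 {n : ℕ} (L γ : ℝ) (hL : 0 < L) (hγ : γ ≥ L)
    (f : Euc n → ℝ) (f' : Euc n → Euc n) (g : Euc n → EReal)
    (hconv : ConvexOn ℝ Set.univ f)
    (hgrad : ∀ x, HasGradientAt f (f' x) x)
    (hLip : ∀ x y, ‖f' x - f' y‖ ≤ L * ‖x - y‖)
    (hgbot : ∀ x, g x ≠ ⊥) (hgtop : ∃ x, g x ≠ ⊤)
    (hglsc : LowerSemicontinuous g)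
    (hgconv : ∀ x y : Euc n, ∀ a b : ℝ, 0 ≤ a → 0 ≤ b → a + b = 1 →
      g (a • x + b • y) ≤ (a : EReal) * g x + (b : EReal) * g y)
    (p : Euc n → Euc n)
    (hp : ∀ xb x, ((f xb + ⟪f' xb, p xb - xb⟫ + γ / 2 * ‖p xb - xb‖ ^ 2 : ℝ) : EReal) + g (p xb)
        ≤ ((f xb + ⟪f' xb, x - xb⟫ + γ / 2 * ‖x - xb‖ ^ 2 : ℝ) : EReal) + g x)
    (X : Set (Euc n))
    (hX : X = {x | ∀ y, (f x : EReal) + g x ≤ (f y : EReal) + g y})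
    (hne : X.Nonempty)
    (xs : Euc n) (hxs : xs ∈ X)
    (fstar : ℝ) (hstar : (f xs : EReal) + g xs = (fstar : ℝ))
    (κ ω : ℝ) (hκ : 0 < κ) (hω : 0 < ω)
    (heGEB : ∀ y, (f y : EReal) + g y ≤ ((fstar + ω : ℝ) : EReal) →
      ‖γ • (y - p y)‖ ≥ κ * Metric.infDist y X)
    (x : ℕ → Euc n)
    (hiter : ∀ k, x (k + 1) = x k - (1 / γ) • (γ • (x k - p (x k)))) :
    ∀ i, (f (x i) : EReal) + g (x i) ≤ ((fstar + ω : ℝ) : EReal) →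
      (f (x (i + 1)) : EReal) + g (x (i + 1)) ≤
        ((fstar + (1 - κ / (2 * γ)) * (((f (x i) : EReal) + g (x i)).toReal - fstar) : ℝ) : EReal) := by
  intro i hsub
  have hγ0 : 0 < γ := lt_of_lt_of_le hL hγ
  set a := x i with ha
  set q := p a with hqdef
  set G := f' a with hG
  -- iterate identity
  have hx1 : x (i + 1) = q := by
    rw [hiter i, smul_smul, one_div, inv_mul_cancel₀ hγ0.ne', one_smul, sub_sub_cancel]
  -- minimality
  have hxs' : ∀ y, (f xs : EReal) + g xs ≤ (f y : EReal) + g y := by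
    rw [hX] at hxs; exact hxs
  have hmin : ∀ y, ((fstar : ℝ) : EReal) ≤ (f y : EReal) + g y := by
    intro y; rw [← hstar]; exact hxs' y
  -- realify g a
  have hga_top : g a ≠ ⊤ := ereal_ne_top_of_add_le _ _ _ hsub
  obtain ⟨ga, hga⟩ : ∃ r : ℝ, g a = (r : ℝ) :=
    ⟨(g a).toReal, ((g a).coe_toReal hga_top (hgbot a)).symm⟩
  -- realify g q
  have hgq_top : g q ≠ ⊤ := by
    have h2 := hp a a
    rw [hga] at h2
    rw [← EReal.coe_add] at h2
    exact ereal_ne_top_of_add_le _ _ _ h2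
  obtain ⟨gq, hgq⟩ : ∃ r : ℝ, g q = (r : ℝ) :=
    ⟨(g q).toReal, ((g q).coe_toReal hgq_top (hgbot q)).symm⟩
  -- members of X realified
  have hbar : ∀ z ∈ X, ∃ gz : ℝ, g z = (gz : ℝ) ∧ f z + gz = fstar := by
    intro z hz
    have hz' : ∀ y, (f z : EReal) + g z ≤ (f y : EReal) + g y := by
      rw [hX] at hz; exact hz
    have he : (f z : EReal) + g z = ((fstar : ℝ) : EReal) := by
      refine le_antisymm ?_ (hmin z)
      rw [← hstar]; exact hz' xs
    have hzt : g z ≠ ⊤ := ereal_ne_top_of_add_le _ _ _ (le_of_eq he)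
    obtain ⟨gz, hgz⟩ : ∃ r : ℝ, g z = (r : ℝ) :=
      ⟨(g z).toReal, ((g z).coe_toReal hzt (hgbot z)).symm⟩
    refine ⟨gz, hgz, ?_⟩
    rw [hgz] at he
    exact_mod_cast he
  -- realified prox inequality
  have hpR : ∀ (u : Euc n) (gu : ℝ), g u = (gu : ℝ) →
      f a + ⟪G, q - a⟫ + γ / 2 * ‖q - a‖ ^ 2 + gq ≤
      f a + ⟪G, u - a⟫ + γ / 2 * ‖u - a‖ ^ 2 + gu := by
    intro u gu hgu
    have h := hp a u
    rw [hgq, hgu] at h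
    exact_mod_cast h
  -- strong convexity of prox subproblem
  have hQ : ∀ (u : Euc n) (gu : ℝ), g u = (gu : ℝ) →
      ⟪G, q - a⟫ + γ / 2 * ‖q - a‖ ^ 2 + gq + γ / 2 * ‖u - q‖ ^ 2 ≤
      ⟪G, u - a⟫ + γ / 2 * ‖u - a‖ ^ 2 + gu := by
    intro u gu hgu
    have key : ∀ σ : ℝ, 0 < σ → σ < 1 →
        ⟪G, q - a⟫ + γ / 2 * ‖q - a‖ ^ 2 + gq + γ / 2 * (1 - σ) * ‖u - q‖ ^ 2 ≤
        ⟪G, u - a⟫ + γ / 2 * ‖u - a‖ ^ 2 + gu := by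
      intro σ h0 h1
      set w := (1 - σ) • q + σ • u with hw
      have hgw0 := hgconv q u (1 - σ) σ (by linarith) (by linarith) (by ring)
      rw [hgq, hgu] at hgw0
      have hgw' : g w ≤ (((1 - σ) * gq + σ * gu : ℝ) : EReal) := by
        refine le_trans hgw0 ?_
        exact_mod_cast le_refl _
      have hwtop : g w ≠ ⊤ := ereal_ne_top_of_le_coe _ _ hgw'
      obtain ⟨gw, hgwe⟩ : ∃ r : ℝ, g w = (r : ℝ) :=
        ⟨(g w).toReal, ((g w).coe_toReal hwtop (hgbot w)).symm⟩
      have hgwR : gw ≤ (1 - σ) * gq + σ * gu := by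
        rw [hgwe] at hgw'; exact_mod_cast hgw'
      have h := hpR w gw hgwe
      have hwa : w - a = (1 - σ) • (q - a) + σ • (u - a) := by
        rw [hw]; module
      have hinner : ⟪G, w - a⟫ = (1 - σ) * ⟪G, q - a⟫ + σ * ⟪G, u - a⟫ := by
        rw [hwa, inner_add_right, real_inner_smul_right, real_inner_smul_right]
      have hnorm : ‖w - a‖ ^ 2 =
          (1 - σ) * ‖q - a‖ ^ 2 + σ * ‖u - a‖ ^ 2 - σ * (1 - σ) * ‖u - q‖ ^ 2 := by
        rw [hwa, norm_combo]
        have he : (q - a) - (u - a) = q - u := by module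
        rw [he, norm_sub_rev q u]
      rw [hinner, hnorm] at h
      have h2 : σ * (⟪G, q - a⟫ + γ / 2 * ‖q - a‖ ^ 2 + gq + γ / 2 * (1 - σ) * ‖u - q‖ ^ 2) ≤
          σ * (⟪G, u - a⟫ + γ / 2 * ‖u - a‖ ^ 2 + gu) := by
        nlinarith [h, hgwR]
      exact le_of_mul_le_mul_left h2 h0
    -- limit σ → 0
    have hM : (0 : ℝ) ≤ γ / 2 * ‖u - q‖ ^ 2 := by positivity
    refine le_of_forall_pos_le_add ?_
    intro ε hε
    set D := γ / 2 * ‖u - q‖ ^ 2 with hD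
    set σ := min (1 / 2) (ε / (D + 1)) with hσ
    have hσ0 : 0 < σ := by
      apply lt_min (by norm_num)
      positivity
    have hσ1 : σ < 1 := lt_of_le_of_lt (min_le_left _ _) (by norm_num)
    have hk := key σ hσ0 hσ1
    have hσD : σ * D ≤ ε := by
      have h1 : σ ≤ ε / (D + 1) := min_le_right _ _
      have h2 : σ * D ≤ (ε / (D + 1)) * D := by
        apply mul_le_mul_of_nonneg_right h1 (by rw [hD]; positivity)
      refine le_trans h2 ?_
      rw [div_mul_eq_mul_div, div_le_iff₀ (by positivity)]
      nlinarith
    simp only [hD] at hσD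
    linarith [hk, hσD]
  -- three-point inequality
  have hV : ∀ (u : Euc n) (gu : ℝ), g u = (gu : ℝ) →
      f q + gq ≤ f u + gu + γ / 2 * ‖u - a‖ ^ 2 - γ / 2 * ‖u - q‖ ^ 2 := by
    intro u gu hgu
    have hd := descent_lemma L f f' hgrad hLip a q
    have hc := grad_convex_ineq f f' hconv hgrad a u
    have hq := hQ u gu hgu
    have hnn : (0 : ℝ) ≤ (γ - L) / 2 * ‖q - a‖ ^ 2 := by
      have : (0:ℝ) ≤ γ - L := by linarith
      positivity
    linarith
  -- basic real facts
  set r := ‖a - q‖ with hr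
  set d := Metric.infDist a X with hd
  have hr0 : (0 : ℝ) ≤ r := norm_nonneg _
  have hd0 : (0 : ℝ) ≤ d := Metric.infDist_nonneg
  have herr : κ * d ≤ γ * r := by
    have h := heGEB a hsub
    rwa [norm_smul, Real.norm_eq_abs, abs_of_pos hγ0] at h
  have hΔ0 : fstar ≤ f a + ga := by
    have h := hmin a
    rw [hga] at h
    exact_mod_cast h
  have hΔp0 : fstar ≤ f q + gq := by
    have h := hmin q
    rw [hgq] at h
    exact_mod_cast h
  -- key inequality along segment towards X
  have hkey : ∀ xb2 ∈ X, ∀ t : ℝ, 0 ≤ t → t ≤ 1 →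
      f q + gq - fstar ≤ (1 - t) * (f a + ga - fstar) +
        γ / 2 * (2 * t * ‖xb2 - a‖ * r - r ^ 2) := by
    intro xb2 hxb2 t ht0 ht1
    obtain ⟨gb, hgb, hgbv⟩ := hbar xb2 hxb2
    set u := a + t • (xb2 - a) with hu
    have hue : u = (1 - t) • a + t • xb2 := by rw [hu]; module
    have hgu0 := hgconv a xb2 (1 - t) t (by linarith) ht0 (by ring)
    rw [hga, hgb, ← hue] at hgu0
    have hgu' : g u ≤ (((1 - t) * ga + t * gb : ℝ) : EReal) := by
      refine le_trans hgu0 ?_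
      exact_mod_cast le_refl _
    have hutop : g u ≠ ⊤ := ereal_ne_top_of_le_coe _ _ hgu'
    obtain ⟨gu, hgue⟩ : ∃ s : ℝ, g u = (s : ℝ) :=
      ⟨(g u).toReal, ((g u).coe_toReal hutop (hgbot u)).symm⟩
    have hguR : gu ≤ (1 - t) * ga + t * gb := by
      rw [hgue] at hgu'; exact_mod_cast hgu'
    have hfu : f u ≤ (1 - t) * f a + t * f xb2 := by
      have := hconv.2 (Set.mem_univ a) (Set.mem_univ xb2) (by linarith : (0:ℝ) ≤ 1 - t) ht0
        (by ring)
      rw [← hue] at this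
      simpa using this
    have hVu := hV u gu hgue
    have hua : ‖u - a‖ = t * ‖xb2 - a‖ := by
      have : u - a = t • (xb2 - a) := by rw [hu]; module
      rw [this, norm_smul, Real.norm_eq_abs, abs_of_nonneg ht0]
    have hsq : (r - t * ‖xb2 - a‖) ^ 2 ≤ ‖u - q‖ ^ 2 := by
      have h1 : |‖a - q‖ - ‖a - u‖| ≤ ‖(a - q) - (a - u)‖ := abs_norm_sub_norm_le _ _
      have h2 : (a - q) - (a - u) = u - q := by module
      have h3 : ‖a - u‖ = t * ‖xb2 - a‖ := by rw [norm_sub_rev]; exact hua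
      rw [h2, h3] at h1
      calc (r - t * ‖xb2 - a‖) ^ 2 = |‖a - q‖ - t * ‖xb2 - a‖| ^ 2 := by rw [sq_abs, hr]
        _ ≤ ‖u - q‖ ^ 2 := by
            apply pow_le_pow_left₀ (abs_nonneg _) h1
    have hnormu : ‖u - a‖ ^ 2 = (t * ‖xb2 - a‖) ^ 2 := by rw [hua]
    have e2 : γ / 2 * (r - t * ‖xb2 - a‖) ^ 2 ≤ γ / 2 * ‖u - q‖ ^ 2 :=
      mul_le_mul_of_nonneg_left hsq (by positivity)
    have e0 : t * (f xb2 + gb) = t * fstar := by rw [hgbv]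
    have expand : γ / 2 * ((t * ‖xb2 - a‖) ^ 2) - γ / 2 * (r - t * ‖xb2 - a‖) ^ 2
        = γ / 2 * (2 * t * ‖xb2 - a‖ * r - r ^ 2) := by ring
    clear_value u
    clear hu hue hgu0 hgu' hgue hua hsq
    have hnormu2 : γ / 2 * ‖u - a‖ ^ 2 = γ / 2 * (t * ‖xb2 - a‖) ^ 2 := by rw [hnormu]
    linarith [hVu, hfu, hguR, e0, hnormu2, e2, expand]
  -- rewrite the goal in real terms
  rw [hx1, hgq, hga]
  have hcoe : ((f a : ℝ) : EReal) + ((ga : ℝ) : EReal) = ((f a + ga : ℝ) : EReal) := by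
    norm_cast
  rw [hcoe, EReal.toReal_coe]
  have hsubR : f a + ga ≤ fstar + ω := by
    rw [hga] at hsub
    exact_mod_cast hsub
  rcases le_or_gt κ (2 * γ) with hcase | hcase
  · -- case κ ≤ 2γ
    set t := κ / (2 * γ) with ht
    have ht0 : 0 < t := by positivity
    have ht1 : t ≤ 1 := by
      rw [ht, div_le_one (by positivity)]
      exact hcase
    have main : f q + gq ≤ fstar + (1 - t) * ((f a + ga) - fstar) := by
      have h : f q + gq - fstar ≤ (1 - t) * (f a + ga - fstar) := by
        refine le_of_forall_pos_le_add ?_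
        intro ε hε
        set c := κ / 2 * r with hc
        have hc0 : (0 : ℝ) ≤ c := by positivity
        set δ := ε / (c + 1) with hδ
        have hδ0 : 0 < δ := by positivity
        obtain ⟨xb2, hxb2X, hxb2d⟩ := (Metric.infDist_lt_iff hne).1
          (show Metric.infDist a X < d + δ by rw [← hd]; linarith)
        have hD : ‖xb2 - a‖ < d + δ := by
          rwa [dist_eq_norm'] at hxb2d
        have h1 := hkey xb2 hxb2X t (le_of_lt ht0) ht1
        have hγt : γ * t = κ / 2 := by
          rw [ht]
          field_simp
        have hDr : ‖xb2 - a‖ * r ≤ (d + δ) * r :=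
          mul_le_mul_of_nonneg_right (le_of_lt hD) hr0
        have hdr : κ * d * r ≤ γ * r * r := mul_le_mul_of_nonneg_right herr hr0
        have hcδ : c * δ ≤ ε := by
          rw [hδ, ← mul_div_assoc, div_le_iff₀ (by positivity : (0:ℝ) < c + 1)]
          nlinarith
        have he1 : γ / 2 * (2 * t * ‖xb2 - a‖ * r - r ^ 2) =
            (κ / 2) * (‖xb2 - a‖ * r) - γ / 2 * r ^ 2 := by
          have : γ / 2 * (2 * t * ‖xb2 - a‖ * r) = (γ * t) * (‖xb2 - a‖ * r) := by ring
          rw [mul_sub, this, hγt]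
        rw [he1] at h1
        have he2 : (κ / 2) * (‖xb2 - a‖ * r) ≤ (κ / 2) * ((d + δ) * r) :=
          mul_le_mul_of_nonneg_left hDr (by positivity)
        have he3 : (κ / 2) * (d * r) ≤ (γ / 2) * (r * r) := by nlinarith
        have he4 : (κ / 2) * (δ * r) = c * δ := by rw [hc]; ring
        nlinarith
      linarith
    rw [ht] at main
    exact_mod_cast main
  · -- case κ > 2γ : everything collapses
    have haux : ∀ δ : ℝ, 0 < δ → Metric.infDist a X < d + δ →
        (∃ xb2 ∈ X, ‖xb2 - a‖ < d + δ) := by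
      intro δ hδ hlt
      obtain ⟨xb2, hxb2X, hxb2d⟩ := (Metric.infDist_lt_iff hne).1 hlt
      refine ⟨xb2, hxb2X, ?_⟩
      rwa [dist_eq_norm'] at hxb2d
    -- for each xb2 ∈ X close to a, get bounds
    have hnear : ∀ xb2 ∈ X, Metric.infDist a X ≤ ‖xb2 - a‖ ∧
        (f q + gq - fstar ≤ γ / 2 * ‖xb2 - a‖ ^ 2 - γ / 2 * ‖xb2 - q‖ ^ 2) := by
      intro xb2 hxb2
      obtain ⟨gb, hgb, hgbv⟩ := hbar xb2 hxb2
      have hVu := hV xb2 gb hgb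
      constructor
      · rw [← norm_sub_rev, ← dist_eq_norm]
        exact Metric.infDist_le_dist_of_mem hxb2
      · linarith
    have hbnd : ∀ δ : ℝ, 0 < δ → r ≤ 2 * (d + δ) ∧ f q + gq - fstar ≤ γ / 2 * (d + δ) ^ 2 := by
      intro δ hδ
      obtain ⟨xb2, hxb2X, hD⟩ := haux δ hδ (by rw [← hd]; linarith)
      obtain ⟨gb, hgb, hgbv⟩ := hbar xb2 hxb2X
      have hVu := hV xb2 gb hgb
      have hDp : (0:ℝ) ≤ d + δ := by linarith
      have hxq : ‖xb2 - q‖ ≤ d + δ := by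
        by_contra hcon
        push_neg at hcon
        have h1 : (d + δ) ^ 2 < ‖xb2 - q‖ ^ 2 := by nlinarith [norm_nonneg (xb2 - q)]
        have h2 : ‖xb2 - a‖ ^ 2 ≤ (d + δ) ^ 2 := by nlinarith [norm_nonneg (xb2 - a)]
        nlinarith
      constructor
      · have htr : ‖a - q‖ ≤ ‖a - xb2‖ + ‖xb2 - q‖ := norm_sub_le_norm_sub_add_norm_sub a xb2 q
        have : ‖a - xb2‖ = ‖xb2 - a‖ := norm_sub_rev _ _
        rw [hr]
        linarith
      · have h2 : ‖xb2 - a‖ ^ 2 ≤ (d + δ) ^ 2 := by nlinarith [norm_nonneg (xb2 - a)]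
        nlinarith [sq_nonneg ‖xb2 - q‖]
    -- d = 0
    have hdz : d = 0 := by
      have h1 : ∀ δ : ℝ, 0 < δ → (κ - 2 * γ) * d ≤ 2 * γ * δ := by
        intro δ hδ
        have h2 := (hbnd δ hδ).1
        nlinarith
      have h2 : (κ - 2 * γ) * d ≤ 0 := by
        refine le_of_forall_pos_le_add ?_
        intro ε hε
        have h3 := h1 (ε / (2 * γ)) (by positivity)
        have he : 2 * γ * (ε / (2 * γ)) = ε := by field_simp
        rw [he] at h3
        linarith
      nlinarith
    -- r = 0
    have hrz : r = 0 := by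
      have h1 : ∀ ε : ℝ, 0 < ε → r ≤ 2 * ε := by
        intro ε hε
        have := (hbnd ε hε).1
        rw [hdz] at this
        simpa using this
      have : r ≤ 0 := by
        refine le_of_forall_pos_le_add ?_
        intro ε hε
        have := h1 (ε / 2) (by positivity)
        linarith
      linarith
    have hqa : q = a := by
      have : a - q = 0 := by
        rw [← norm_eq_zero]; exact hrz
      have := sub_eq_zero.1 this
      exact this.symm
    have hgqa : gq = ga := by
      have : ((gq : ℝ) : EReal) = ((ga : ℝ) : EReal) := by
        rw [← hgq, ← hga, hqa]
      exact_mod_cast this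
    -- Δ₊ = 0
    have hΔz : f q + gq = fstar := by
      have h1 : ∀ ε : ℝ, 0 < ε → f q + gq - fstar ≤ γ / 2 * ε ^ 2 := by
        intro ε hε
        have := (hbnd ε hε).2
        rw [hdz] at this
        simpa using this
      have h2 : f q + gq - fstar ≤ 0 := by
        refine le_of_forall_pos_le_add ?_
        intro ε hε
        have hs : (0:ℝ) < Real.sqrt (2 * ε / γ) := by
          apply Real.sqrt_pos.2; positivity
        have h3 := h1 _ hs
        rw [Real.sq_sqrt (by positivity : (0:ℝ) ≤ 2 * ε / γ)] at h3
        have he : γ / 2 * (2 * ε / γ) = ε := by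
          field_simp
        rw [he] at h3
        linarith
      linarith
    have main : f q + gq ≤ fstar + (1 - κ / (2 * γ)) * ((f a + ga) - fstar) := by
      have hfa : f a + ga = fstar := by
        rw [← hqa, ← hgqa]; exact hΔz
      rw [hfa, hΔz]
      simp
    exact_mod_cast main
end

section
/- Consider minimizing f(x) = g(Ex) over the polyhedron Q = {x : Ax ≤ b}, where g is μ-strongly convex with L-Lipschitz gradient and 𝒳 = argmin_{x∈Q} f is nonempty. Then there exists a constant C₂ > 0 (depending on E, A, and μ) such that the quadratic growth property holds on Q: f(y) ≥ f* + C₂·d²(y, 𝒳) for all y ∈ Q. -/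
open RealInnerProductSpace Metric Set Filter
open Topology

lemma sc_lower {m : ℕ} (μ : ℝ) (hμ : 0 ≤ μ) (g : Euc m → ℝ) (g' : Euc m → Euc m)
    (hgrad : ∀ u, HasGradientAt g (g' u) u)
    (hSC : ∀ u v, ⟪g' u - g' v, u - v⟫ ≥ μ * ‖u - v‖ ^ 2) (u v : Euc m) :
    g v + ⟪g' v, u - v⟫ + μ/2 * ‖u - v‖^2 ≤ g u := by
  set d := u - v with hd
  have hL : ∀ t : ℝ, HasDerivAt (fun t : ℝ => v + t • d) d t := by
    intro t
    simpa using (hasDerivAt_id t).smul_const d |>.const_add v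
  have hgl : ∀ t : ℝ, HasDerivAt (fun t : ℝ => g (v + t • d)) ⟪g' (v + t • d), d⟫ t := by
    intro t
    have h1 := (hgrad (v + t • d)).hasFDerivAt.comp_hasDerivAt t (hL t)
    simpa [InnerProductSpace.toDual_apply_apply, Function.comp_def] using h1
  set ψ : ℝ → ℝ := fun t => g (v + t • d) - t * ⟪g' v, d⟫ - μ * t^2/2 * ‖d‖^2 with hψdef
  have hψ : ∀ t : ℝ, HasDerivAt ψ (⟪g' (v + t • d), d⟫ - ⟪g' v, d⟫ - μ * t * ‖d‖^2) t := by
    intro t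
    have h2 : HasDerivAt (fun t : ℝ => t * ⟪g' v, d⟫) ⟪g' v, d⟫ t := by
      simpa using (hasDerivAt_id t).mul_const ⟪g' v, d⟫
    have h3 : HasDerivAt (fun t : ℝ => μ * t^2/2 * ‖d‖^2) (μ * t * ‖d‖^2) t := by
      have := ((hasDerivAt_pow 2 t).const_mul μ).div_const 2 |>.mul_const (‖d‖^2)
      convert this using 1
      · rfl
      · rfl
      · ring
    exact ((hgl t).sub h2).sub h3
  have key : ψ 0 ≤ ψ 1 := by
    apply monotoneOn_of_deriv_nonneg (convex_Icc (0:ℝ) 1)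
      (Continuous.continuousOn (by
        have : Continuous ψ := by
          have : Differentiable ℝ ψ := fun t => (hψ t).differentiableAt
          exact this.continuous
        exact this))
      (fun t ht => ((hψ t).differentiableAt).differentiableWithinAt) ?_
      (by norm_num) (by norm_num) (by norm_num)
    intro t ht
    rw [interior_Icc] at ht
    rw [(hψ t).deriv]
    have h4 := hSC (v + t • d) v
    have h5 : (v + t • d) - v = t • d := by abel
    rw [h5] at h4
    rw [real_inner_smul_right] at h4
    have h6 : ‖t • d‖^2 = t^2 * ‖d‖^2 := by
      rw [norm_smul, mul_pow, Real.norm_eq_abs, sq_abs]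
    have h7 : inner ℝ (g' (v + t • d) - g' v) d * t ≥ μ * t * (t * ‖d‖^2) := by
      rw [mul_comm]
      calc t * inner ℝ (g' (v + t • d) - g' v) d ≥ μ * ‖t • d‖^2 := h4
        _ = μ * t * (t * ‖d‖^2) := by rw [h6]; ring
    have ht0 : 0 < t := ht.1
    have h8 : inner ℝ (g' (v + t • d) - g' v) d ≥ μ * t * ‖d‖^2 := by
      nlinarith [h7]
    have h9 : inner ℝ (g' (v + t • d) - g' v) d = (⟪g' (v + t • d), d⟫ - ⟪g' v, d⟫ : ℝ) := by
      rw [inner_sub_left]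
    linarith [h9 ▸ h8]
  have e0 : ψ 0 = g v := by simp [hψdef]
  have e1 : ψ 1 = g u - ⟪g' v, d⟫ - μ/2 * ‖d‖^2 := by
    simp only [hψdef, one_smul, one_pow, one_mul]
    have : v + d = u := by rw [hd]; abel
    rw [this]; ring
  rw [e0, e1] at key
  linarith

lemma coeff_bound {E : Type*} [NormedAddCommGroup E] [NormedSpace ℝ E]
    {ι : Type*} [Fintype ι] (w : ι → E) (hw : LinearIndependent ℝ w) :
    ∃ c : ℝ, 0 < c ∧ ∀ lam : ι → ℝ, ∑ i, |lam i| ≤ c * ‖∑ i, lam i • w i‖ := by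
  classical
  set T : (ι → ℝ) →ₗ[ℝ] E :=
    { toFun := fun lam => ∑ i, lam i • w i
      map_add' := by intro x y; simp [add_smul, Finset.sum_add_distrib]
      map_smul' := by intro c x; simp [smul_smul, Finset.smul_sum] } with hT
  have hinj : Function.Injective T := by
    rw [← LinearMap.ker_eq_bot, LinearMap.ker_eq_bot']
    intro lam hlam
    funext i
    exact (Fintype.linearIndependent_iff.1 hw) lam hlam i
  set e := LinearEquiv.ofInjective T hinj with he
  haveI : FiniteDimensional ℝ ↥(LinearMap.range T) := Module.Finite.range T
  set f := LinearMap.toContinuousLinearMap (e.symm.toLinearMap) with hf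
  set C := ‖f‖ + 1 with hC
  have hCpos : 0 < C := by positivity
  refine ⟨(Fintype.card ι) * C + 1, by positivity, fun lam => ?_⟩
  have h1 : ‖lam‖ ≤ C * ‖T lam‖ := by
    have h2 : lam = f ⟨T lam, LinearMap.mem_range_self T lam⟩ := by
      have : (⟨T lam, LinearMap.mem_range_self T lam⟩ : LinearMap.range T) = e lam := by
        ext; rfl
      rw [this]
      simp [hf, he]
    calc ‖lam‖ = ‖f ⟨T lam, LinearMap.mem_range_self T lam⟩‖ := by rw [← h2]
      _ ≤ ‖f‖ * ‖(⟨T lam, LinearMap.mem_range_self T lam⟩ : LinearMap.range T)‖ :=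
          f.le_opNorm _
      _ = ‖f‖ * ‖T lam‖ := rfl
      _ ≤ C * ‖T lam‖ := by
          apply mul_le_mul_of_nonneg_right (by simp [hC]) (norm_nonneg _)
  have h3 : ∑ i, |lam i| ≤ (Fintype.card ι) * ‖lam‖ := by
    calc ∑ i, |lam i| ≤ ∑ _i : ι, ‖lam‖ := by
          apply Finset.sum_le_sum
          intro i _
          simpa [Real.norm_eq_abs] using norm_le_pi_norm lam i
      _ = (Fintype.card ι) * ‖lam‖ := by simp [Finset.sum_const, mul_comm]
  have hTlam : T lam = ∑ i, lam i • w i := rfl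
  have hnn : (0:ℝ) ≤ ‖T lam‖ := norm_nonneg _
  calc ∑ i, |lam i| ≤ (Fintype.card ι) * ‖lam‖ := h3
    _ ≤ (Fintype.card ι) * (C * ‖T lam‖) := by
        apply mul_le_mul_of_nonneg_left h1 (by positivity)
    _ ≤ ((Fintype.card ι) * C + 1) * ‖T lam‖ := by nlinarith
    _ = ((Fintype.card ι) * C + 1) * ‖∑ i, lam i • w i‖ := by rw [hTlam]

lemma cone_cara {E : Type*} [AddCommGroup E] [Module ℝ E] {ι : Type*} [Fintype ι]
    [DecidableEq ι] (w : ι → E) (s : Finset ι) :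
    ∀ v : E, (∃ lam : ι → ℝ, (∀ i, 0 ≤ lam i) ∧ (∀ i ∉ s, lam i = 0) ∧ v = ∑ i, lam i • w i) →
    ∃ t, t ⊆ s ∧ (LinearIndependent ℝ (fun i : t => w (i : ι))) ∧
      ∃ lam : ι → ℝ, (∀ i, 0 ≤ lam i) ∧ (∀ i ∉ t, lam i = 0) ∧ v = ∑ i, lam i • w i := by
  classical
  induction s using Finset.strongInduction with
  | _ s ih =>
    rintro v ⟨lam, hnn, hsupp, hv⟩
    by_cases hind : LinearIndependent ℝ (fun i : s => w (i : ι))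
    · exact ⟨s, Finset.Subset.refl s, hind, lam, hnn, hsupp, hv⟩
    · rw [Fintype.linearIndependent_iff] at hind
      push_neg at hind
      obtain ⟨c, hcsum, j₀, hj₀⟩ := hind
      set c' : ι → ℝ := fun i => if h : i ∈ s then c ⟨i, h⟩ else 0 with hc'
      have hc'supp : ∀ i ∉ s, c' i = 0 := fun i hi => dif_neg hi
      have hc'sum : ∑ i, c' i • w i = 0 := by
        rw [← Finset.sum_subset (Finset.subset_univ s) (fun i _ hi => by
          rw [hc'supp i hi, zero_smul])]
        rw [← Finset.sum_attach s (fun i => c' i • w i)]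
        rw [← hcsum]
        apply Finset.sum_congr rfl
        intro i _
        simp [hc', i.2]
      have hc'ne : c' (j₀ : ι) ≠ 0 := by simpa [hc', j₀.2] using hj₀
      -- get a d with a positive entry
      have key : ∀ d : ι → ℝ, (∀ i ∉ s, d i = 0) → (∑ i, d i • w i = 0) →
          (∃ i, 0 < d i) →
          ∃ t, t ⊆ s ∧ (LinearIndependent ℝ (fun i : t => w (i : ι))) ∧
            ∃ lam : ι → ℝ, (∀ i, 0 ≤ lam i) ∧ (∀ i ∉ t, lam i = 0) ∧ v = ∑ i, lam i • w i := by
        intro d hdsupp hdsum ⟨ip, hip⟩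
        have hT : (s.filter (fun i => 0 < d i)).Nonempty := by
          refine ⟨ip, Finset.mem_filter.2 ⟨?_, hip⟩⟩
          by_contra h
          rw [hdsupp ip h] at hip
          exact lt_irrefl 0 hip
        obtain ⟨i₀, hi₀T, hi₀min⟩ :=
          Finset.exists_min_image (s.filter (fun i => 0 < d i)) (fun i => lam i / d i) hT
        have hi₀s : i₀ ∈ s := (Finset.mem_filter.1 hi₀T).1
        have hdi₀ : 0 < d i₀ := (Finset.mem_filter.1 hi₀T).2
        set r : ℝ := lam i₀ / d i₀ with hr
        have hr0 : 0 ≤ r := div_nonneg (hnn i₀) hdi₀.le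
        set lam' : ι → ℝ := fun i => lam i - r * d i with hlam'
        have hnn' : ∀ i, 0 ≤ lam' i := by
          intro i
          simp only [hlam']
          rcases lt_or_ge 0 (d i) with hdi | hdi
          · have his : i ∈ s := by
              by_contra h
              rw [hdsupp i h] at hdi; exact lt_irrefl 0 hdi
            have := hi₀min i (Finset.mem_filter.2 ⟨his, hdi⟩)
            rw [div_le_div_iff₀ hdi₀ hdi] at this
            have : r * d i ≤ lam i := by
              rw [hr, div_mul_eq_mul_div, div_le_iff₀ hdi₀]
              linarith [this]
            linarith
          · nlinarith [hnn i, hr0]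
        have hsupp' : ∀ i ∉ s.erase i₀, lam' i = 0 := by
          intro i hi
          by_cases his : i ∈ s
          · have : i = i₀ := by
              by_contra hne
              exact hi (Finset.mem_erase.2 ⟨hne, his⟩)
            subst this
            show lam i - r * d i = 0
            rw [hr]
            field_simp
            ring
          · show lam i - r * d i = 0
            rw [hsupp i his, hdsupp i his]
            ring
        have hv' : v = ∑ i, lam' i • w i := by
          have hstep : ∑ i, lam' i • w i
              = (∑ i, lam i • w i) - r • ∑ i, d i • w i := by
            rw [Finset.smul_sum, ← Finset.sum_sub_distrib]
            apply Finset.sum_congr rfl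
            intro i _
            show (lam i - r * d i) • w i = lam i • w i - r • d i • w i
            rw [sub_smul, smul_smul]
          rw [hstep, hdsum, smul_zero, sub_zero, hv]
        obtain ⟨t, hts, hind', rest⟩ :=
          ih (s.erase i₀) (Finset.erase_ssubset hi₀s) v ⟨lam', hnn', hsupp', hv'⟩
        exact ⟨t, hts.trans (Finset.erase_subset i₀ s), hind', rest⟩
      rcases lt_trichotomy (c' (j₀:ι)) 0 with hneg | hzero | hpos
      · refine key (fun i => -c' i) (fun i hi => by show -c' i = 0; rw [hc'supp i hi, neg_zero])
          ?_ ⟨j₀, by show (0:ℝ) < -c' (j₀:ι); linarith⟩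
        show ∑ i, (-c' i) • w i = 0
        simp only [neg_smul, Finset.sum_neg_distrib, hc'sum, neg_zero]
      · exact absurd hzero hc'ne
      · exact key c' hc'supp hc'sum ⟨j₀, hpos⟩


def coneOf {E : Type*} [AddCommGroup E] [Module ℝ E] {ι : Type*} [Fintype ι]
    (w : ι → E) (t : Finset ι) : Set E :=
  {v | ∃ lam : ι → ℝ, (∀ i, 0 ≤ lam i) ∧ (∀ i ∉ t, lam i = 0) ∧ v = ∑ i, lam i • w i}


lemma sum_support_eq {M : Type*} [AddCommMonoid M] {ι : Type*} [Fintype ι]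
    (t : Finset ι) (f : ι → M) (h : ∀ i ∉ t, f i = 0) :
    ∑ i : ι, f i = ∑ i : t, f (i : ι) := by
  rw [← Finset.sum_subset (Finset.subset_univ t) (fun i _ hi => h i hi),
    Finset.univ_eq_attach, Finset.sum_attach t f]

lemma coneOf_isClosed_indep {E : Type*} [NormedAddCommGroup E] [NormedSpace ℝ E]
    {ι : Type*} [Fintype ι] [DecidableEq ι] (w : ι → E) (t : Finset ι)
    (hind : LinearIndependent ℝ (fun i : t => w (i : ι))) :
    IsClosed (coneOf w t) := by
  classical
  obtain ⟨c, hc, hbound⟩ := coeff_bound (fun i : t => w (i : ι)) hind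
  set Φ : (t → ℝ) → E := fun mu => ∑ i : t, mu i • w (i : ι) with hΦ
  have hΦsub : ∀ x y : t → ℝ, Φ x - Φ y = Φ (x - y) := by
    intro x y
    rw [hΦ]
    simp only
    rw [← Finset.sum_sub_distrib]
    apply Finset.sum_congr rfl
    intro i _
    rw [Pi.sub_apply, sub_smul]
  have hcont : Continuous Φ := by
    apply continuous_finset_sum
    intro i _
    exact (continuous_apply i).smul continuous_const
  have hΦadd : ∀ x y : t → ℝ, Φ (x + y) = Φ x + Φ y := by
    intro x y
    rw [hΦ]
    simp only
    rw [← Finset.sum_add_distrib]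
    apply Finset.sum_congr rfl
    intro i _
    rw [Pi.add_apply, add_smul]
  have huc : UniformContinuous Φ := by
    have : LipschitzWith (∑ i : t, ‖w (i:ι)‖).toNNReal Φ := by
      apply LipschitzWith.of_dist_le_mul
      intro x y
      rw [dist_eq_norm, dist_eq_norm, hΦsub]
      calc ‖Φ (x - y)‖ ≤ ∑ i : t, ‖(x - y) i • w (i:ι)‖ := norm_sum_le _ _
        _ ≤ ∑ i : t, ‖w (i:ι)‖ * ‖x - y‖ := by
            apply Finset.sum_le_sum
            intro i _
            rw [norm_smul]
            exact mul_le_mul_of_nonneg_right (norm_le_pi_norm (x - y) i)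
              (norm_nonneg _) |>.trans_eq (mul_comm _ _)
        _ = (∑ i : t, ‖w (i:ι)‖) * ‖x - y‖ := by rw [← Finset.sum_mul]
        _ ≤ ((∑ i : t, ‖w (i:ι)‖).toNNReal : ℝ) * ‖x - y‖ := by
            apply mul_le_mul_of_nonneg_right (Real.le_coe_toNNReal _) (norm_nonneg _)
    exact this.uniformContinuous
  have hkey : ∀ u : t → ℝ, ‖u‖ ≤ c * ‖Φ u‖ := by
    intro u
    rw [pi_norm_le_iff_of_nonneg (by positivity)]
    intro i
    calc ‖u i‖ = |u i| := rfl
      _ ≤ ∑ j : t, |u j| := Finset.single_le_sum (fun j _ => abs_nonneg (u j))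
          (Finset.mem_univ i)
      _ ≤ c * ‖Φ u‖ := hbound u
  have hanti : AntilipschitzWith c.toNNReal Φ := by
    apply AntilipschitzWith.of_le_mul_dist
    intro x y
    rw [dist_eq_norm, dist_eq_norm, hΦsub]
    calc ‖x - y‖ ≤ c * ‖Φ (x - y)‖ := hkey (x - y)
      _ = (c.toNNReal : ℝ) * ‖Φ (x - y)‖ := by rw [Real.coe_toNNReal c hc.le]
  have hemb := hanti.isClosedEmbedding huc
  have himg : coneOf w t = Φ '' {mu | ∀ i, 0 ≤ mu i} := by
    ext v
    constructor
    · rintro ⟨lam, hnn, hsupp, hv⟩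
      refine ⟨fun i => lam i, fun i => hnn i, ?_⟩
      rw [hΦ]
      simp only
      rw [hv, sum_support_eq t (fun i => lam i • w i) (fun i hi => by
        show lam i • w i = 0
        rw [hsupp i hi, zero_smul])]
    · rintro ⟨mu, hmu, hv⟩
      refine ⟨fun i => if h : i ∈ t then mu ⟨i, h⟩ else 0, ?_, ?_, ?_⟩
      · intro i
        show 0 ≤ if h : i ∈ t then mu ⟨i, h⟩ else 0
        by_cases h : i ∈ t
        · rw [dif_pos h]; exact hmu _
        · rw [dif_neg h]
      · intro i hi
        show (if h : i ∈ t then mu ⟨i, h⟩ else 0) = 0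
        rw [dif_neg hi]
      · rw [← hv, hΦ]
        simp only
        rw [sum_support_eq t _ (fun i hi => by
          show (if h : i ∈ t then mu ⟨i, h⟩ else 0) • w i = 0
          rw [dif_neg hi, zero_smul])]
        apply Finset.sum_congr rfl
        intro i _
        show mu i • w (i:ι) = (if h : (i:ι) ∈ t then mu ⟨i, h⟩ else 0) • w (i:ι)
        rw [dif_pos i.2]
  rw [himg]
  apply hemb.isClosedMap
  have : {mu : t → ℝ | ∀ i, 0 ≤ mu i} = ⋂ i, {mu | 0 ≤ mu i} := by
    ext mu; simp
  rw [this]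
  exact isClosed_iInter fun i => isClosed_le continuous_const (continuous_apply i)

lemma coneOf_mono {E : Type*} [AddCommGroup E] [Module ℝ E] {ι : Type*} [Fintype ι]
    (w : ι → E) {t s : Finset ι} (h : t ⊆ s) : coneOf w t ⊆ coneOf w s := by
  rintro v ⟨lam, hnn, hsupp, hv⟩
  exact ⟨lam, hnn, fun i hi => hsupp i (fun his => hi (h his)), hv⟩

lemma coneOf_isClosed {E : Type*} [NormedAddCommGroup E] [NormedSpace ℝ E]
    {ι : Type*} [Fintype ι] [DecidableEq ι] (w : ι → E) (s : Finset ι) :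
    IsClosed (coneOf w s) := by
  classical
  have hunion : coneOf w s =
      ⋃ t ∈ {t : Finset ι | t ⊆ s ∧ LinearIndependent ℝ (fun i : t => w (i : ι))},
        coneOf w t := by
    ext v
    constructor
    · rintro ⟨lam, hnn, hsupp, hv⟩
      obtain ⟨t, hts, hind, lam', h1, h2, h3⟩ := cone_cara w s v ⟨lam, hnn, hsupp, hv⟩
      exact Set.mem_biUnion ⟨hts, hind⟩ ⟨lam', h1, h2, h3⟩
    · intro hv
      obtain ⟨t, ht, hvt⟩ := Set.mem_iUnion₂.1 hv
      exact coneOf_mono w ht.1 hvt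
  rw [hunion]
  exact Set.Finite.isClosed_biUnion (Set.toFinite _)
    (fun t ht => coneOf_isClosed_indep w t ht.2)

lemma coneOf_convex {E : Type*} [NormedAddCommGroup E] [NormedSpace ℝ E]
    {ι : Type*} [Fintype ι] (w : ι → E) (s : Finset ι) : Convex ℝ (coneOf w s) := by
  rintro x ⟨lx, hlx, hsx, hx⟩ y ⟨ly, hly, hsy, hy⟩ α β hα hβ hαβ
  refine ⟨fun i => α * lx i + β * ly i, ?_, ?_, ?_⟩
  · intro i; have := hlx i; have := hly i; positivity
  · intro i hi; show α * lx i + β * ly i = 0; rw [hsx i hi, hsy i hi]; ring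
  · rw [hx, hy, Finset.smul_sum, Finset.smul_sum, ← Finset.sum_add_distrib]
    apply Finset.sum_congr rfl
    intro i _
    rw [add_smul, smul_smul, smul_smul]

lemma zero_mem_coneOf {E : Type*} [AddCommGroup E] [Module ℝ E] {ι : Type*} [Fintype ι]
    (w : ι → E) (s : Finset ι) : (0:E) ∈ coneOf w s :=
  ⟨fun _ => 0, fun _ => le_refl 0, fun _ _ => rfl, by simp⟩

lemma smul_mem_coneOf {E : Type*} [AddCommGroup E] [Module ℝ E] {ι : Type*} [Fintype ι]
    (w : ι → E) (s : Finset ι) {v : E} (hv : v ∈ coneOf w s) {r : ℝ} (hr : 0 ≤ r) :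
    r • v ∈ coneOf w s := by
  obtain ⟨lam, hnn, hsupp, hveq⟩ := hv
  refine ⟨fun i => r * lam i, fun i => mul_nonneg hr (hnn i), fun i hi => by
    show r * lam i = 0
    rw [hsupp i hi, mul_zero], ?_⟩
  rw [hveq, Finset.smul_sum]
  apply Finset.sum_congr rfl
  intro i _
  rw [smul_smul]









set_option maxHeartbeats 1000000 in
lemma hoffman {n m k : ℕ} (A : Euc n →L[ℝ] Euc m) (a : Fin k → Euc n) (b : Fin k → ℝ)
    (c : Euc m) (X : Set (Euc n))
    (hXdef : X = {x | (∀ j, ⟪a j, x⟫ ≤ b j) ∧ A x = c})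
    (hne : X.Nonempty) :
    ∃ θ : ℝ, 0 < θ ∧ ∀ y, (∀ j, ⟪a j, y⟫ ≤ b j) →
      Metric.infDist y X ≤ θ * ‖A y - c‖ := by
  classical
  set adj : Euc m →L[ℝ] Euc n := ContinuousLinearMap.adjoint A with hadj
  set w : ((Fin m ⊕ Fin m) ⊕ Fin k) → Euc n :=
    Sum.elim (Sum.elim (fun r => adj (EuclideanSpace.single r 1))
      (fun r => -adj (EuclideanSpace.single r 1))) a with hw
  -- uniform coefficient constant
  have hconst : ∀ t : Finset ((Fin m ⊕ Fin m) ⊕ Fin k), ∃ ct : ℝ, 0 < ct ∧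
      (LinearIndependent ℝ (fun i : t => w (i : (Fin m ⊕ Fin m) ⊕ Fin k)) →
        ∀ lam : ((Fin m ⊕ Fin m) ⊕ Fin k) → ℝ, (∀ i ∉ t, lam i = 0) →
          ∑ i, |lam i| ≤ ct * ‖∑ i, lam i • w i‖) := by
    intro t
    by_cases hind : LinearIndependent ℝ (fun i : t => w (i : (Fin m ⊕ Fin m) ⊕ Fin k))
    · obtain ⟨c0, hc0, hb⟩ := coeff_bound _ hind
      refine ⟨c0, hc0, fun _ lam hsupp => ?_⟩
      have e1 : ∑ i, |lam i| = ∑ i : t, |lam (i : (Fin m ⊕ Fin m) ⊕ Fin k)| :=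
        sum_support_eq t (fun i => |lam i|) (fun i hi => by
          show |lam i| = 0; rw [hsupp i hi, abs_zero])
      have e2 : ∑ i, lam i • w i = ∑ i : t, lam (i : (Fin m ⊕ Fin m) ⊕ Fin k) • w i :=
        sum_support_eq t (fun i => lam i • w i) (fun i hi => by
          show lam i • w i = 0; rw [hsupp i hi, zero_smul])
      rw [e1, e2]
      exact hb (fun i : t => lam i)
    · exact ⟨1, one_pos, fun h => absurd h hind⟩
  choose ct hctpos hct using hconst
  set κ : ℝ := ∑ t : Finset ((Fin m ⊕ Fin m) ⊕ Fin k), ct t with hκ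
  have hκpos : 0 < κ := Finset.sum_pos (fun t _ => hctpos t) ⟨∅, Finset.mem_univ ∅⟩
  have hκge : ∀ t, ct t ≤ κ :=
    fun t => Finset.single_le_sum (fun t _ => (hctpos t).le) (Finset.mem_univ t)
  refine ⟨κ, hκpos, ?_⟩
  intro y hy
  -- X closed and convex
  have hXc : IsClosed X := by
    rw [hXdef]
    have : {x : Euc n | (∀ j, ⟪a j, x⟫ ≤ b j) ∧ A x = c}
        = (⋂ j, {x : Euc n | ⟪a j, x⟫ ≤ b j}) ∩ (A ⁻¹' {c}) := by
      ext x; simp [Set.mem_iInter]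
    rw [this]
    refine IsClosed.inter (isClosed_iInter fun j => ?_)
      (isClosed_singleton.preimage A.continuous)
    exact isClosed_le (Continuous.inner continuous_const continuous_id) continuous_const
  have hXconv : Convex ℝ X := by
    rw [hXdef]
    rintro x ⟨hx1, hx2⟩ z ⟨hz1, hz2⟩ α β hα hβ hαβ
    constructor
    · intro j
      rw [inner_add_right, real_inner_smul_right, real_inner_smul_right]
      calc α * ⟪a j, x⟫ + β * ⟪a j, z⟫ ≤ α * b j + β * b j := by
            apply add_le_add
            · exact mul_le_mul_of_nonneg_left (hx1 j) hα
            · exact mul_le_mul_of_nonneg_left (hz1 j) hβ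
        _ = b j := by rw [← add_mul, hαβ, one_mul]
    · rw [map_add, map_smul, map_smul, hx2, hz2, ← add_smul, hαβ, one_smul]
  obtain ⟨p, hpX, hdist⟩ := hXc.exists_infDist_eq_dist hne y
  have hpmem : (∀ j, ⟪a j, p⟫ ≤ b j) ∧ A p = c := by rw [hXdef] at hpX; exact hpX
  -- variational inequality
  have hvar : ∀ z ∈ X, ⟪y - p, z - p⟫ ≤ 0 := by
    have h1 : ‖y - p‖ = ⨅ z : X, ‖y - (z : Euc n)‖ := by
      have h2 : Metric.infDist y X = ⨅ z : X, ‖y - (z : Euc n)‖ := by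
        simp only [Metric.infDist_eq_iInf, dist_eq_norm]
      rw [← dist_eq_norm, ← hdist, h2]
    exact (norm_eq_iInf_iff_real_inner_le_zero hXconv hpX).1 h1
  set v : Euc n := y - p with hv
  -- tangent directions
  have hvK : ∀ h : Euc n, A h = 0 → (∀ j, ⟪a j, p⟫ = b j → ⟪a j, h⟫ ≤ 0) →
      ⟪v, h⟫ ≤ 0 := by
    intro h hAh hact
    have hstep : ∃ ε : ℝ, 0 < ε ∧ p + ε • h ∈ X := by
      have hj : ∀ j, ∀ᶠ ε in nhdsWithin (0:ℝ) (Set.Ioi 0),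
          ⟪a j, p⟫ + ε * ⟪a j, h⟫ ≤ b j := by
        intro j
        rcases eq_or_lt_of_le (hpmem.1 j) with heq | hlt
        · have hle : ⟪a j, h⟫ ≤ 0 := hact j heq
          apply eventually_nhdsWithin_of_forall
          intro ε hε
          have : ε * ⟪a j, h⟫ ≤ 0 := mul_nonpos_of_nonneg_of_nonpos (le_of_lt hε) hle
          linarith [heq.le]
        · have hcont : Tendsto (fun ε : ℝ => ⟪a j, p⟫ + ε * ⟪a j, h⟫)
              (nhdsWithin (0:ℝ) (Set.Ioi 0)) (𝓝 (⟪a j, p⟫ + 0 * ⟪a j, h⟫)) := by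
            apply Tendsto.mono_left _ nhdsWithin_le_nhds
            exact (continuous_const.add ((continuous_id).mul continuous_const)).tendsto 0
          have : ∀ᶠ ε in nhdsWithin (0:ℝ) (Set.Ioi 0),
              ⟪a j, p⟫ + ε * ⟪a j, h⟫ < b j := by
            apply hcont.eventually_lt_const
            simpa using hlt
          exact this.mono fun ε hε => hε.le
      have hall : ∀ᶠ ε in nhdsWithin (0:ℝ) (Set.Ioi 0),
          ∀ j, ⟪a j, p⟫ + ε * ⟪a j, h⟫ ≤ b j := eventually_all.2 hj
      have hpos : ∀ᶠ ε in nhdsWithin (0:ℝ) (Set.Ioi 0), (0:ℝ) < ε :=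
        eventually_mem_nhdsWithin
      obtain ⟨ε, hε1, hε2⟩ := (hall.and hpos).exists
      refine ⟨ε, hε2, ?_⟩
      rw [hXdef]
      constructor
      · intro j
        rw [inner_add_right, real_inner_smul_right]
        exact hε1 j
      · rw [map_add, map_smul, hpmem.2, hAh, smul_zero, add_zero]
    obtain ⟨ε, hε, hmem⟩ := hstep
    have := hvar _ hmem
    rw [show p + ε • h - p = ε • h from by abel, real_inner_smul_right] at this
    nlinarith
  -- active index set
  set sJ : Finset ((Fin m ⊕ Fin m) ⊕ Fin k) := Finset.univ.filter
    (Sum.elim (fun _ => True) (fun j => ⟪a j, p⟫ = b j)) with hsJ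
  have hinl : ∀ i : Fin m ⊕ Fin m, Sum.inl i ∈ sJ := by
    intro i
    rw [hsJ, Finset.mem_filter]
    exact ⟨Finset.mem_univ _, trivial⟩
  have hinr : ∀ j : Fin k, Sum.inr j ∈ sJ ↔ ⟪a j, p⟫ = b j := by
    intro j
    rw [hsJ, Finset.mem_filter]
    simp
  -- single generators belong to the cone
  have hgen : ∀ i ∈ sJ, w i ∈ coneOf w sJ := by
    intro i hi
    refine ⟨fun i' => if i' = i then 1 else 0, fun i' => by positivity, ?_, ?_⟩
    · intro i' hi'
      show (if i' = i then (1:ℝ) else 0) = 0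
      rw [if_neg]
      rintro rfl
      exact hi' hi
    · rw [show ∑ i', (if i' = i then (1:ℝ) else 0) • w i' = w i from ?_]
      rw [Finset.sum_eq_single i]
      · rw [if_pos rfl, one_smul]
      · intro i' _ hne'
        rw [if_neg hne', zero_smul]
      · intro habs
        exact absurd (Finset.mem_univ i) habs
  -- Farkas: v is in the cone
  have hvC : v ∈ coneOf w sJ := by
    by_contra hvnC
    obtain ⟨f, u, hfC, hfv⟩ := geometric_hahn_banach_closed_point
      (coneOf_convex w sJ) (coneOf_isClosed w sJ) hvnC
    set h : Euc n := (InnerProductSpace.toDual ℝ (Euc n)).symm f with hh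
    have hfh : ∀ z : Euc n, f z = ⟪h, z⟫ := by
      intro z
      rw [hh]
      exact (InnerProductSpace.toDual_symm_apply).symm
    have hu0 : (0:ℝ) < u := by
      have := hfC 0 (zero_mem_coneOf w sJ)
      rwa [map_zero] at this
    have hCnonpos : ∀ z ∈ coneOf w sJ, f z ≤ 0 := by
      intro z hz
      by_contra hposz
      push_neg at hposz
      have hr : (0:ℝ) ≤ (u + 1) / f z := by positivity
      have := hfC _ (smul_mem_coneOf w sJ hz hr)
      rw [map_smul] at this
      have : (u + 1) / f z * f z < u := this
      rw [div_mul_cancel₀ _ (ne_of_gt hposz)] at this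
      linarith
    have hwle : ∀ i ∈ sJ, ⟪h, w i⟫ ≤ 0 := by
      intro i hi
      rw [← hfh]
      exact hCnonpos _ (hgen i hi)
    have hAh : A h = 0 := by
      have hr : ∀ r : Fin m, (A h) r = 0 := by
        intro r
        have h1 := hwle (Sum.inl (Sum.inl r)) (hinl _)
        have h2 := hwle (Sum.inl (Sum.inr r)) (hinl _)
        rw [hw] at h1 h2
        simp only [Sum.elim_inl, Sum.elim_inr] at h1 h2
        rw [real_inner_comm, hadj, ContinuousLinearMap.adjoint_inner_left] at h1
        rw [inner_neg_right, real_inner_comm, hadj,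
          ContinuousLinearMap.adjoint_inner_left] at h2
        rw [EuclideanSpace.inner_single_left] at h1 h2
        simp only [map_one, one_mul] at h1 h2
        linarith
      ext r
      exact hr r
    have hactive : ∀ j, ⟪a j, p⟫ = b j → ⟪a j, h⟫ ≤ 0 := by
      intro j hj
      have := hwle (Sum.inr j) ((hinr j).2 hj)
      rw [hw] at this
      simp only [Sum.elim_inr] at this
      rwa [real_inner_comm] at this
    have hcontra := hvK h hAh hactive
    have : (0:ℝ) < f v := lt_trans hu0 hfv
    rw [hfh, real_inner_comm] at this
    linarith
  -- Caratheodory + coefficient bound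
  obtain ⟨t, hts, hind, lam, hnn, hsupp, hveq⟩ := cone_cara w sJ v hvC
  have hAv : A v = A y - c := by rw [hv, map_sub, hpmem.2]
  have hbound : ‖v‖^2 ≤ κ * ‖v‖ * ‖A y - c‖ := by
    have h1 : (‖v‖:ℝ)^2 = ⟪v, v⟫ := (real_inner_self_eq_norm_sq v).symm
    have h2 : ⟪v, v⟫ = ∑ i, lam i * ⟪w i, v⟫ := by
      nth_rewrite 1 [hveq]
      rw [sum_inner]
      apply Finset.sum_congr rfl
      intro i _
      rw [real_inner_smul_left]
    have h3 : ∀ i, lam i * ⟪w i, v⟫ ≤ |lam i| * ‖A y - c‖ := by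
      intro i
      by_cases hzero : lam i = 0
      · rw [hzero]
        simp [abs_zero]
      have hit : i ∈ t := by
        by_contra hit
        exact hzero (hsupp i hit)
      have hisJ : i ∈ sJ := hts hit
      match i with
      | Sum.inl (Sum.inl r) =>
        have : ⟪w (Sum.inl (Sum.inl r)), v⟫ ≤ ‖A y - c‖ := by
          rw [hw]
          simp only [Sum.elim_inl]
          rw [hadj, ContinuousLinearMap.adjoint_inner_left, hAv]
          calc ⟪EuclideanSpace.single r (1:ℝ), A y - c⟫
              ≤ ‖EuclideanSpace.single r (1:ℝ)‖ * ‖A y - c‖ := real_inner_le_norm _ _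
            _ = ‖A y - c‖ := by rw [EuclideanSpace.norm_single]; simp
        calc lam _ * ⟪w (Sum.inl (Sum.inl r)), v⟫ ≤ lam _ * ‖A y - c‖ :=
              mul_le_mul_of_nonneg_left this (hnn _)
          _ = |lam _| * ‖A y - c‖ := by rw [abs_of_nonneg (hnn _)]
      | Sum.inl (Sum.inr r) =>
        have : ⟪w (Sum.inl (Sum.inr r)), v⟫ ≤ ‖A y - c‖ := by
          rw [hw]
          simp only [Sum.elim_inl, Sum.elim_inr]
          rw [inner_neg_left, hadj, ContinuousLinearMap.adjoint_inner_left, hAv]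
          calc -⟪EuclideanSpace.single r (1:ℝ), A y - c⟫
              ≤ |⟪EuclideanSpace.single r (1:ℝ), A y - c⟫| := neg_le_abs _
            _ ≤ ‖EuclideanSpace.single r (1:ℝ)‖ * ‖A y - c‖ := abs_real_inner_le_norm _ _
            _ = ‖A y - c‖ := by rw [EuclideanSpace.norm_single]; simp
        calc lam _ * ⟪w (Sum.inl (Sum.inr r)), v⟫ ≤ lam _ * ‖A y - c‖ :=
              mul_le_mul_of_nonneg_left this (hnn _)
          _ = |lam _| * ‖A y - c‖ := by rw [abs_of_nonneg (hnn _)]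
      | Sum.inr j =>
        have hact : ⟪a j, p⟫ = b j := (hinr j).1 hisJ
        have : ⟪w (Sum.inr j), v⟫ ≤ 0 := by
          rw [hw]
          simp only [Sum.elim_inr]
          rw [hv, inner_sub_right, hact]
          linarith [hy j]
        calc lam _ * ⟪w (Sum.inr j), v⟫ ≤ 0 :=
              mul_nonpos_of_nonneg_of_nonpos (hnn _) this
          _ ≤ |lam _| * ‖A y - c‖ := by positivity
    have h4 : ∑ i, lam i * ⟪w i, v⟫ ≤ (∑ i, |lam i|) * ‖A y - c‖ := by
      rw [Finset.sum_mul]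
      exact Finset.sum_le_sum fun i _ => h3 i
    have h5 : ∑ i, |lam i| ≤ ct t * ‖v‖ := by
      have := hct t hind lam hsupp
      rwa [← hveq] at this
    have h6 : (∑ i, |lam i|) * ‖A y - c‖ ≤ ct t * ‖v‖ * ‖A y - c‖ :=
      mul_le_mul_of_nonneg_right h5 (norm_nonneg _)
    have h7 : ct t * ‖v‖ * ‖A y - c‖ ≤ κ * ‖v‖ * ‖A y - c‖ := by
      apply mul_le_mul_of_nonneg_right _ (norm_nonneg _)
      exact mul_le_mul_of_nonneg_right (hκge t) (norm_nonneg _)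
    calc (‖v‖:ℝ)^2 = ⟪v, v⟫ := h1
      _ = ∑ i, lam i * ⟪w i, v⟫ := h2
      _ ≤ (∑ i, |lam i|) * ‖A y - c‖ := h4
      _ ≤ ct t * ‖v‖ * ‖A y - c‖ := h6
      _ ≤ κ * ‖v‖ * ‖A y - c‖ := h7
  have hid : Metric.infDist y X = ‖v‖ := by rw [hdist, dist_eq_norm, hv]
  rw [hid]
  rcases eq_or_lt_of_le (norm_nonneg v) with h0 | h0
  · rw [← h0]
    positivity
  · nlinarith

set_option maxHeartbeats 2000000 in
theorem stmt_12 {n m k : ℕ} (μ L : ℝ) (hμ : 0 < μ) (hL : 0 < L)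
    (g : Euc m → ℝ) (g' : Euc m → Euc m)
    (hgrad : ∀ u, HasGradientAt g (g' u) u)
    (hSC : ∀ u v, ⟪g' u - g' v, u - v⟫ ≥ μ * ‖u - v‖ ^ 2)
    (hLip : ∀ u v, ‖g' u - g' v‖ ≤ L * ‖u - v‖)
    (A : Euc n →L[ℝ] Euc m)
    (a : Fin k → Euc n) (b : Fin k → ℝ)
    (Q : Set (Euc n)) (hQ : Q = {x | ∀ j, ⟪a j, x⟫ ≤ b j})
    (X : Set (Euc n)) (hX : X = {x ∈ Q | ∀ y ∈ Q, g (A x) ≤ g (A y)})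
    (hne : X.Nonempty) (xs : Euc n) (hxs : xs ∈ X) :
    ∃ C₂ : ℝ, 0 < C₂ ∧ ∀ y ∈ Q,
      g (A y) ≥ g (A xs) + C₂ * (Metric.infDist y X) ^ 2 := by
  classical
  have hsc : ∀ u v : Euc m, g v + ⟪g' v, u - v⟫ + μ/2 * ‖u - v‖^2 ≤ g u :=
    sc_lower μ hμ.le g g' hgrad hSC
  have hxsQ : xs ∈ Q := by rw [hX] at hxs; exact hxs.1
  have hxsmin : ∀ y ∈ Q, g (A xs) ≤ g (A y) := by rw [hX] at hxs; exact hxs.2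
  have hxscon : ∀ j, ⟪a j, xs⟫ ≤ b j := by rw [hQ] at hxsQ; exact hxsQ
  -- X is the polyhedron {x | constraints ∧ A x = A xs}
  have hXeq : X = {x | (∀ j, ⟪a j, x⟫ ≤ b j) ∧ A x = A xs} := by
    ext x
    constructor
    · intro hxX
      rw [hX] at hxX
      obtain ⟨hxQ, hxmin⟩ := hxX
      have hxcon : ∀ j, ⟪a j, x⟫ ≤ b j := by rw [hQ] at hxQ; exact hxQ
      refine ⟨hxcon, ?_⟩
      set z : Euc n := (1/2 : ℝ) • x + (1/2 : ℝ) • xs with hz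
      have hzQ : z ∈ Q := by
        rw [hQ]
        intro j
        rw [hz, inner_add_right, real_inner_smul_right, real_inner_smul_right]
        have := hxcon j
        have := hxscon j
        linarith
      have hgx : g (A x) ≤ g (A z) := hxmin z hzQ
      have hgxs : g (A xs) ≤ g (A z) := hxsmin z hzQ
      have heq : g (A x) = g (A xs) := le_antisymm (hxmin xs hxsQ) (hxsmin x hxQ)
      have hAz : A z = (1/2 : ℝ) • A x + (1/2 : ℝ) • A xs := by
        rw [hz, map_add, map_smul, map_smul]
      have e1 : A x - A z = (1/2:ℝ) • (A x - A xs) := by rw [hAz]; module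
      have e2 : A xs - A z = -((1/2:ℝ) • (A x - A xs)) := by rw [hAz]; module
      have s1 := hsc (A x) (A z)
      have s2 := hsc (A xs) (A z)
      have hin : ⟪g' (A z), A x - A z⟫ + ⟪g' (A z), A xs - A z⟫ = 0 := by
        rw [← inner_add_right, e1, e2]
        simp
      have n1 : ‖A x - A z‖^2 = (1/4) * ‖A x - A xs‖^2 := by
        rw [e1, norm_smul]
        simp only [norm_div, Real.norm_eq_abs]
        rw [mul_pow]
        norm_num
      have n2 : ‖A xs - A z‖^2 = (1/4) * ‖A x - A xs‖^2 := by
        rw [e2, norm_neg, norm_smul]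
        simp only [Real.norm_eq_abs]
        rw [mul_pow]
        norm_num
      have hfin : μ/2 * ((1/4) * ‖A x - A xs‖^2 + (1/4) * ‖A x - A xs‖^2) ≤ 0 := by
        nlinarith [s1, s2, hin, n1, n2, hgx, hgxs, heq]
      have : ‖A x - A xs‖^2 ≤ 0 := by nlinarith
      have : ‖A x - A xs‖ = 0 := by nlinarith [sq_nonneg ‖A x - A xs‖, norm_nonneg (A x - A xs)]
      have : A x - A xs = 0 := norm_eq_zero.1 this
      exact sub_eq_zero.1 this
    · rintro ⟨hcon, hAeq⟩
      rw [hX]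
      refine ⟨by rw [hQ]; exact hcon, fun y hyQ => ?_⟩
      rw [hAeq]
      exact hxsmin y hyQ
  obtain ⟨θ, hθ, hhof⟩ := hoffman A a b (A xs) X hXeq hne
  -- first order optimality
  have hfo : ∀ y ∈ Q, 0 ≤ ⟪g' (A xs), A y - A xs⟫ := by
    intro y hyQ
    have hycon : ∀ j, ⟪a j, y⟫ ≤ b j := by rw [hQ] at hyQ; exact hyQ
    set D : Euc m := A y - A xs with hD
    by_cases hD0 : D = 0
    · rw [hD0, inner_zero_right]
    have hz : ∀ t : ℝ, 0 ≤ t → t ≤ 1 → xs + t • (y - xs) ∈ Q := by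
      intro t ht0 ht1
      rw [hQ]
      intro j
      rw [inner_add_right, real_inner_smul_right, inner_sub_right]
      have := hycon j
      have := hxscon j
      nlinarith
    have hkey : ∀ t : ℝ, 0 < t → t ≤ 1 →
        0 ≤ ⟪g' (A (xs + t • (y - xs))), D⟫ := by
      intro t ht0 ht1
      have hmem := hz t ht0.le ht1
      have hge : g (A xs) ≤ g (A (xs + t • (y - xs))) := hxsmin _ hmem
      have hs := hsc (A xs) (A (xs + t • (y - xs)))
      have hAzt : A (xs + t • (y - xs)) = A xs + t • D := by
        rw [map_add, map_smul, map_sub, hD]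
      have e3 : A xs - A (xs + t • (y - xs)) = -(t • D) := by rw [hAzt]; module
      rw [e3] at hs
      rw [inner_neg_right, real_inner_smul_right] at hs
      have hn : ‖-(t • D)‖^2 = t^2 * ‖D‖^2 := by
        rw [norm_neg, norm_smul, Real.norm_eq_abs, mul_pow, sq_abs]
      rw [hn] at hs
      nlinarith [hs, hge, sq_nonneg t, sq_nonneg ‖D‖, mul_pos (mul_pos (half_pos hμ) (pow_pos ht0 2)) (pow_pos (norm_pos_iff.2 hD0) 2)]
    by_contra hneg
    push_neg at hneg
    set I : ℝ := ⟪g' (A xs), D⟫ with hI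
    have hDpos : 0 < ‖D‖ := norm_pos_iff.2 hD0
    have hlb : ∀ t : ℝ, 0 < t → t ≤ 1 → -(L * t * ‖D‖^2) ≤ I := by
      intro t ht0 ht1
      have h1 := hkey t ht0 ht1
      have hAzt : A (xs + t • (y - xs)) = A xs + t • D := by
        rw [map_add, map_smul, map_sub, hD]
      have h2 : I = ⟪g' (A (xs + t • (y - xs))), D⟫
          + ⟪g' (A xs) - g' (A (xs + t • (y - xs))), D⟫ := by
        rw [hI, ← inner_add_left]
        congr 1
        abel
      have h3 : |⟪g' (A xs) - g' (A (xs + t • (y - xs))), D⟫|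
          ≤ ‖g' (A xs) - g' (A (xs + t • (y - xs)))‖ * ‖D‖ := abs_real_inner_le_norm _ _
      have h4 : ‖g' (A xs) - g' (A (xs + t • (y - xs)))‖
          ≤ L * ‖A xs - A (xs + t • (y - xs))‖ := hLip _ _
      have h5 : ‖A xs - A (xs + t • (y - xs))‖ = t * ‖D‖ := by
        rw [show A xs - A (xs + t • (y - xs)) = -(t • D) from by rw [hAzt]; module]
        rw [norm_neg, norm_smul, Real.norm_eq_abs, abs_of_pos ht0]
      rw [h5] at h4
      have h6 : -(L * t * ‖D‖^2) ≤ ⟪g' (A xs) - g' (A (xs + t • (y - xs))), D⟫ := by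
        have := neg_abs_le ⟪g' (A xs) - g' (A (xs + t • (y - xs))), D⟫
        have h7 : ‖g' (A xs) - g' (A (xs + t • (y - xs)))‖ * ‖D‖ ≤ L * t * ‖D‖^2 := by
          nlinarith [norm_nonneg D]
        nlinarith
      rw [h2]
      linarith [h1, h6]
    set t0 : ℝ := min 1 (-I / (2 * L * ‖D‖^2 + 1)) with ht0def
    have hIneg : I < 0 := hneg
    have ht0pos : 0 < t0 := by
      apply lt_min one_pos
      apply div_pos (by linarith)
      positivity
    have ht0le : t0 ≤ 1 := min_le_left _ _
    have hcontra := hlb t0 ht0pos ht0le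
    have ht0le2 : t0 ≤ -I / (2 * L * ‖D‖^2 + 1) := min_le_right _ _
    have hpos2 : (0:ℝ) < 2 * L * ‖D‖^2 + 1 := by positivity
    have : L * t0 * ‖D‖^2 ≤ L * (-I / (2 * L * ‖D‖^2 + 1)) * ‖D‖^2 := by
      apply mul_le_mul_of_nonneg_right _ (sq_nonneg _)
      exact mul_le_mul_of_nonneg_left ht0le2 hL.le
    have hfrac : L * (-I / (2 * L * ‖D‖^2 + 1)) * ‖D‖^2 < -I := by
      rw [div_eq_mul_inv]
      rw [show L * (-I * (2 * L * ‖D‖^2 + 1)⁻¹) * ‖D‖^2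
          = (-I) * ((L * ‖D‖^2) * (2 * L * ‖D‖^2 + 1)⁻¹) from by ring]
      have hlt : (L * ‖D‖^2) * (2 * L * ‖D‖^2 + 1)⁻¹ < 1 := by
        rw [mul_inv_lt_iff₀ hpos2]
        nlinarith [mul_pos hL (pow_pos hDpos 2)]
      nlinarith [hlt, hIneg]
    linarith
  -- conclusion
  refine ⟨μ / (2 * θ^2), by positivity, fun y hyQ => ?_⟩
  have hycon : ∀ j, ⟪a j, y⟫ ≤ b j := by rw [hQ] at hyQ; exact hyQ
  have hd := hhof y hycon
  have hs := hsc (A y) (A xs)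
  have hfo' := hfo y hyQ
  have hdn : 0 ≤ Metric.infDist y X := Metric.infDist_nonneg
  have hsq : (Metric.infDist y X)^2 ≤ θ^2 * ‖A y - A xs‖^2 := by nlinarith
  have hgrow : g (A xs) + μ/2 * ‖A y - A xs‖^2 ≤ g (A y) := by linarith
  have : μ / (2 * θ^2) * (Metric.infDist y X)^2 ≤ μ/2 * ‖A y - A xs‖^2 := by
    rw [div_mul_eq_mul_div, div_le_iff₀ (by positivity)]
    have h8 : μ * (Metric.infDist y X)^2 ≤ μ * (θ^2 * ‖A y - A xs‖^2) :=
      mul_le_mul_of_nonneg_left hsq hμ.le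
    nlinarith
  linarith
end
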